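/- Let n ≥ 1 and let S be a Sperner family on {1,…,n} with Sperner polynomial g_S. Then g_S′(t) ≥ g_S(t)(1 − g_S(t)) / (t(1 − t)) for every t ∈ (0,1). Moreover, if equality holds at some point t* ∈ (0,1), then g_S is the identity, g_S(t) = t for all t. -/

import Mathlib

open MeasureTheory

/-- The Sperner statistic of a family `S` of subsets of `{1,…,n}`:
`H_S(x) = max_{A ∈ S} min_{i ∈ A} x_i`. -/
noncomputable def spernerStat {n : ℕ} (S : Finset (Finset (Fin n))) (hS : S.Nonempty)
    (hne : ∀ A ∈ S, A.Nonempty) (x : Fin n → ℝ) : ℝ :=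
  S.attach.sup' (Finset.attach_nonempty_iff.mpr hS)
    (fun A => A.1.inf' (hne A.1 A.2) x)

/- The module of a Sperner family:
`h_S(t) = Σ_{ε ∈ {0,1}^n, H_S(ε)=0} t^{z(ε)} (1−t)^{n−z(ε)}`, where `z(ε)` is the
number of zero coordinates of `ε`. -/
open scoped Classical in
noncomputable def spernerModule {n : ℕ} (S : Finset (Finset (Fin n))) (hS : S.Nonempty)
    (hne : ∀ A ∈ S, A.Nonempty) (t : ℝ) : ℝ :=
  ∑ ε : Fin n → Bool,
    if spernerStat S hS hne (fun i => if ε i then 1 else 0) = 0 then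
      t ^ (Finset.univ.filter fun i => ε i = false).card *
        (1 - t) ^ (n - (Finset.univ.filter fun i => ε i = false).card)
    else 0

/- The Sperner polynomial of a Sperner family:
`g_S(t) = Σ_{ε ∈ {0,1}^n, H_S(ε)=1} t^{o(ε)} (1−t)^{n−o(ε)}`, where `o(ε)` is the
number of coordinates of `ε` equal to `1`; equivalently `g_S(t) = 1 − h_S(1−t)`. -/
open scoped Classical in
noncomputable def spernerPoly {n : ℕ} (S : Finset (Finset (Fin n))) (hS : S.Nonempty)
    (hne : ∀ A ∈ S, A.Nonempty) (t : ℝ) : ℝ :=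
  ∑ ε : Fin n → Bool,
    if spernerStat S hS hne (fun i => if ε i then 1 else 0) = 1 then
      t ^ (Finset.univ.filter fun i => ε i = true).card *
        (1 - t) ^ (n - (Finset.univ.filter fun i => ε i = true).card)
    else 0

/-! ### Auxiliary development: the Moore–Shannon inequality for monotone
Boolean functions.

We associate to any Boolean function `f : (Fin n → Bool) → Bool` the polynomial
`G n f t = ∑_ε 1_{f ε} ∏_i (if ε i then t else 1-t)` and prove by induction on `n`
the inequality `G(1-G) ≤ t(1-t) G'` on `(0,1)` for monotone `f`, with equality only
for constants and dictators. -/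

noncomputable def mbG (n : ℕ) (f : (Fin n → Bool) → Bool) (t : ℝ) : ℝ :=
  ∑ ε : Fin n → Bool, (if f ε then (1:ℝ) else 0) * ∏ i, (if ε i then t else 1 - t)

lemma mbG_zero_eq (f : (Fin 0 → Bool) → Bool) :
    mbG 0 f = fun _ => (if f default then (1:ℝ) else 0) := by
  funext t
  rw [mbG, Finset.univ_unique, Finset.sum_singleton]
  simp only [Finset.univ_eq_empty, Finset.prod_empty, mul_one]
  congr 1
  · exact congrArg (fun x => f x = true) (Subsingleton.elim _ _)

lemma mbGrec (n : ℕ) (f : (Fin (n+1) → Bool) → Bool) (t : ℝ) :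
    mbG (n+1) f t = (1 - t) * mbG n (fun ε => f (Fin.cons false ε)) t
      + t * mbG n (fun ε => f (Fin.cons true ε)) t := by
  rw [mbG, ← Equiv.sum_comp (Fin.consEquiv (fun _ : Fin (n+1) => Bool))]
  rw [Fintype.sum_prod_type, Fintype.sum_bool]
  have hce : ∀ (b : Bool) (ε : Fin n → Bool),
      (Fin.consEquiv fun _ : Fin (n+1) => Bool) (b, ε) = Fin.cons b ε := fun _ _ => rfl
  simp only [hce, Fin.prod_univ_succ, Fin.cons_zero, Fin.cons_succ, if_true, ite_true,
    Bool.false_eq_true, if_false, ite_false, mbG, Finset.mul_sum]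
  rw [add_comm]
  congr 1 <;> exact Finset.sum_congr rfl fun x _ => by ring

lemma mbG_diff (n : ℕ) (f : (Fin n → Bool) → Bool) : Differentiable ℝ (mbG n f) := by
  induction n with
  | zero => rw [mbG_zero_eq]; exact differentiable_const _
  | succ n ih =>
    have : mbG (n+1) f = fun t => (1 - t) * mbG n (fun ε => f (Fin.cons false ε)) t
        + t * mbG n (fun ε => f (Fin.cons true ε)) t := funext (mbGrec n f)
    rw [this]
    exact (((differentiable_const 1).sub differentiable_id).mul (ih _)).add
      (differentiable_id.mul (ih _))

lemma mbG_hasDeriv (n : ℕ) (f : (Fin (n+1) → Bool) → Bool) (t : ℝ) :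
    HasDerivAt (mbG (n+1) f)
      (mbG n (fun ε => f (Fin.cons true ε)) t - mbG n (fun ε => f (Fin.cons false ε)) t
        + (1 - t) * deriv (mbG n (fun ε => f (Fin.cons false ε))) t
        + t * deriv (mbG n (fun ε => f (Fin.cons true ε))) t) t := by
  have h : mbG (n+1) f = fun t => (1 - t) * mbG n (fun ε => f (Fin.cons false ε)) t
      + t * mbG n (fun ε => f (Fin.cons true ε)) t := funext (mbGrec n f)
  rw [h]
  have h0 := ((mbG_diff n (fun ε => f (Fin.cons false ε))) t).hasDerivAt
  have h1 := ((mbG_diff n (fun ε => f (Fin.cons true ε))) t).hasDerivAt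
  have := (((hasDerivAt_const t (1:ℝ)).sub (hasDerivAt_id t)).mul h0).add
    ((hasDerivAt_id t).mul h1)
  refine this.congr_deriv ?_
  simp only [id_eq, Pi.sub_apply]
  ring

lemma mbG_nonneg (n : ℕ) (f : (Fin n → Bool) → Bool) {t : ℝ} (h0 : 0 ≤ t) (h1 : t ≤ 1) :
    0 ≤ mbG n f t := by
  refine Finset.sum_nonneg fun ε _ => mul_nonneg ?_ (Finset.prod_nonneg fun i _ => ?_)
  · split <;> norm_num
  · split <;> linarith

lemma mbG_mono_fun (n : ℕ) {f g : (Fin n → Bool) → Bool} (h : ∀ x, f x ≤ g x) {t : ℝ}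
    (h0 : 0 ≤ t) (h1 : t ≤ 1) : mbG n f t ≤ mbG n g t := by
  refine Finset.sum_le_sum fun ε _ => mul_le_mul_of_nonneg_right ?_
    (Finset.prod_nonneg fun i _ => by split <;> linarith)
  have := h ε
  cases hf : f ε <;> cases hg : g ε <;> simp_all
  exact absurd this (by decide)

lemma mbG_true (n : ℕ) (t : ℝ) : mbG n (fun _ => true) t = 1 := by
  induction n with
  | zero => rw [mbG_zero_eq]; simp
  | succ n ih => rw [mbGrec]; simp only [ih]; ring

lemma mbG_false (n : ℕ) (t : ℝ) : mbG n (fun _ => false) t = 0 := by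
  simp [mbG]

lemma mbG_le_one (n : ℕ) (f : (Fin n → Bool) → Bool) {t : ℝ} (h0 : 0 ≤ t) (h1 : t ≤ 1) :
    mbG n f t ≤ 1 := by
  have := mbG_mono_fun n (f := f) (g := fun _ => true) (fun x => by simp) h0 h1
  rwa [mbG_true] at this

lemma mbG_congr (n : ℕ) {f g : (Fin n → Bool) → Bool} (h : ∀ x, f x = g x) :
    mbG n f = mbG n g := by rw [show f = g from funext h]

lemma mbG_dict (n : ℕ) (i : Fin n) (f : (Fin n → Bool) → Bool) (h : ∀ x, f x = x i)
    (t : ℝ) : mbG n f t = t := by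
  induction n with
  | zero => exact i.elim0
  | succ n ih =>
    rw [mbGrec]
    rcases Fin.eq_zero_or_eq_succ i with hi | ⟨j, hj⟩
    · have e0 : ∀ ε, f (Fin.cons false ε) = false := fun ε => by
        rw [h, hi, Fin.cons_zero]
      have e1 : ∀ ε, f (Fin.cons true ε) = true := fun ε => by
        rw [h, hi, Fin.cons_zero]
      rw [mbG_congr n e0, mbG_congr n e1, mbG_false, mbG_true]; ring
    · have e0 : ∀ ε : Fin n → Bool, f (Fin.cons false ε) = ε j := fun ε => by
        rw [h, hj, Fin.cons_succ]
      have e1 : ∀ ε : Fin n → Bool, f (Fin.cons true ε) = ε j := fun ε => by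
        rw [h, hj, Fin.cons_succ]
      rw [mbG_congr n e0, mbG_congr n e1, ih j _ (fun _ => rfl)]
      ring

lemma mbG_eq_zero (n : ℕ) (f : (Fin n → Bool) → Bool) {t : ℝ} (h0 : 0 < t) (h1 : t < 1)
    (h : mbG n f t = 0) : ∀ x, f x = false := by
  intro x
  have hW : ∀ ε : Fin n → Bool, 0 < ∏ i, (if ε i then t else 1 - t) :=
    fun ε => Finset.prod_pos fun i _ => by split <;> linarith
  have := (Finset.sum_eq_zero_iff_of_nonneg (fun ε _ =>
    mul_nonneg (by split <;> norm_num) (hW ε).le)).mp h x (Finset.mem_univ x)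
  rcases mul_eq_zero.mp this with hc | hc
  · by_contra hx
    rw [Bool.not_eq_false] at hx
    rw [if_pos hx] at hc
    norm_num at hc
  · exact absurd hc (hW x).ne'

lemma mbG_add_not (n : ℕ) (f : (Fin n → Bool) → Bool) (t : ℝ) :
    mbG n f t + mbG n (fun x => !(f x)) t = 1 := by
  rw [← mbG_true n t, mbG, mbG, mbG, ← Finset.sum_add_distrib]
  refine Finset.sum_congr rfl fun x _ => ?_
  cases hx : f x <;> simp [hx]

lemma mbG_eq_one (n : ℕ) (f : (Fin n → Bool) → Bool) {t : ℝ} (h0 : 0 < t) (h1 : t < 1)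
    (h : mbG n f t = 1) : ∀ x, f x = true := by
  intro x
  have h2 : mbG n (fun x => !(f x)) t = 0 := by
    have := mbG_add_not n f t; linarith
  have := mbG_eq_zero n _ h0 h1 h2 x
  simpa using this

lemma mb_cons_le_cons {n : ℕ} {b b' : Bool} {ε ε' : Fin n → Bool} (hb : b ≤ b')
    (h : ε ≤ ε') : (Fin.cons b ε : Fin (n+1) → Bool) ≤ Fin.cons b' ε' := by
  intro i
  refine Fin.cases ?_ (fun j => ?_) i
  · simpa using hb
  · simpa using h j

/-- The Moore–Shannon inequality for monotone Boolean functions, together with its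
equality case: equality at a point of `(0,1)` forces `f` to be constant or a
dictator. -/
lemma mbG_key : ∀ (n : ℕ) (f : (Fin n → Bool) → Bool), Monotone f →
    ∀ t ∈ Set.Ioo (0:ℝ) 1,
      (mbG n f t * (1 - mbG n f t) ≤ t * (1 - t) * deriv (mbG n f) t) ∧
      (t * (1 - t) * deriv (mbG n f) t = mbG n f t * (1 - mbG n f t) →
        (∀ x, f x = false) ∨ (∀ x, f x = true) ∨ ∃ i, ∀ x, f x = x i) := by
  intro n
  induction n with
  | zero =>
    intro f hf t ht
    have hG : mbG 0 f = fun _ => (if f default then (1:ℝ) else 0) := mbG_zero_eq f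
    have hd : deriv (mbG 0 f) t = 0 := by rw [hG]; simp
    constructor
    · rw [hd, hG]; cases h : f default <;> simp [h]
    · intro _
      cases h : f default with
      | false => exact Or.inl fun x => by rw [Subsingleton.elim x default, h]
      | true => exact Or.inr (Or.inl fun x => by rw [Subsingleton.elim x default, h])
  | succ n ih =>
    intro f hf t ht
    obtain ⟨ht0, ht1⟩ := ht
    set f₀ : (Fin n → Bool) → Bool := fun ε => f (Fin.cons false ε) with hf₀def
    set f₁ : (Fin n → Bool) → Bool := fun ε => f (Fin.cons true ε) with hf₁def
    have hm₀ : Monotone f₀ := fun u v h => hf (mb_cons_le_cons le_rfl h)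
    have hm₁ : Monotone f₁ := fun u v h => hf (mb_cons_le_cons le_rfl h)
    have h01 : ∀ ε, f₀ ε ≤ f₁ ε := fun ε => hf (mb_cons_le_cons (by decide) le_rfl)
    set a := mbG n f₀ t with hadef
    set b := mbG n f₁ t with hbdef
    set d₀ := deriv (mbG n f₀) t with hd₀def
    set d₁ := deriv (mbG n f₁) t with hd₁def
    have hderiv : deriv (mbG (n+1) f) t = b - a + (1 - t) * d₀ + t * d₁ :=
      (mbG_hasDeriv n f t).deriv
    have hval : mbG (n+1) f t = (1 - t) * a + t * b := mbGrec n f t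
    obtain ⟨ih₀, ih₀e⟩ := ih f₀ hm₀ t ⟨ht0, ht1⟩
    obtain ⟨ih₁, ih₁e⟩ := ih f₁ hm₁ t ⟨ht0, ht1⟩
    have ha0 : 0 ≤ a := mbG_nonneg n f₀ ht0.le ht1.le
    have hb1 : b ≤ 1 := mbG_le_one n f₁ ht0.le ht1.le
    have hab : a ≤ b := mbG_mono_fun n h01 ht0.le ht1.le
    have hid : t * (1 - t) * deriv (mbG (n+1) f) t
        - mbG (n+1) f t * (1 - mbG (n+1) f t)
        = t * (1 - t) * ((b - a) * (1 - (b - a)))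
          + (1 - t) * (t * (1 - t) * d₀ - a * (1 - a))
          + t * (t * (1 - t) * d₁ - b * (1 - b)) := by
      rw [hderiv, hval]; ring
    have hs0 : 0 ≤ t * (1 - t) * d₀ - a * (1 - a) := by linarith
    have hs1 : 0 ≤ t * (1 - t) * d₁ - b * (1 - b) := by linarith
    have hba : 0 ≤ (b - a) * (1 - (b - a)) := mul_nonneg (by linarith) (by linarith)
    have htt : 0 < t * (1 - t) := mul_pos ht0 (by linarith)
    have hA : 0 ≤ t * (1 - t) * ((b - a) * (1 - (b - a))) := mul_nonneg htt.le hba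
    have hB : 0 ≤ (1 - t) * (t * (1 - t) * d₀ - a * (1 - a)) :=
      mul_nonneg (by linarith) hs0
    have hC : 0 ≤ t * (t * (1 - t) * d₁ - b * (1 - b)) := mul_nonneg ht0.le hs1
    constructor
    · linarith
    · intro heq
      have hA0 : t * (1 - t) * ((b - a) * (1 - (b - a))) = 0 := by linarith
      have hB0 : (1 - t) * (t * (1 - t) * d₀ - a * (1 - a)) = 0 := by linarith
      have hC0 : t * (t * (1 - t) * d₁ - b * (1 - b)) = 0 := by linarith
      have hs0' : t * (1 - t) * d₀ = a * (1 - a) := by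
        rcases mul_eq_zero.mp hB0 with h | h
        · linarith
        · linarith
      have hs1' : t * (1 - t) * d₁ = b * (1 - b) := by
        rcases mul_eq_zero.mp hC0 with h | h
        · linarith
        · linarith
      have hba0 : (b - a) * (1 - (b - a)) = 0 := by
        rcases mul_eq_zero.mp hA0 with h | h
        · exact absurd h htt.ne'
        · exact h
      rcases mul_eq_zero.mp hba0 with hcase | hcase
      · -- b = a
        have hbe : b = a := by linarith
        rcases ih₀e hs0' with hF0 | hT0 | ⟨i, hD0⟩ <;>
          rcases ih₁e hs1' with hF1 | hT1 | ⟨j, hD1⟩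
        · -- both false
          refine Or.inl fun x => ?_
          rw [← Fin.cons_self_tail x]
          cases h0 : x 0
          · exact hF0 _
          · exact hF1 _
        · -- false / true : a = 0, b = 1
          exfalso
          have ha' : a = 0 := by rw [hadef, mbG_congr n hF0]; exact mbG_false n t
          have hb' : b = 1 := by rw [hbdef, mbG_congr n hT1]; exact mbG_true n t
          rw [ha', hb'] at hbe; norm_num at hbe
        · -- false / dict : a = 0, b = t
          exfalso
          have ha' : a = 0 := by rw [hadef, mbG_congr n hF0]; exact mbG_false n t
          have hb' : b = t := by rw [hbdef]; exact mbG_dict n j f₁ hD1 t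
          rw [ha', hb'] at hbe; exact ht0.ne' hbe
        · -- true / false
          exfalso
          have := h01 (fun _ => false)
          rw [hT0, hF1] at this
          exact absurd this (by decide)
        · -- both true
          refine Or.inr (Or.inl fun x => ?_)
          rw [← Fin.cons_self_tail x]
          cases h0 : x 0
          · exact hT0 _
          · exact hT1 _
        · -- true / dict : a = 1, b = t
          exfalso
          have ha' : a = 1 := by rw [hadef, mbG_congr n hT0]; exact mbG_true n t
          have hb' : b = t := by rw [hbdef]; exact mbG_dict n j f₁ hD1 t
          rw [ha', hb'] at hbe; exact ht1.ne hbe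
        · -- dict / false : a = t, b = 0
          exfalso
          have ha' : a = t := by rw [hadef]; exact mbG_dict n i f₀ hD0 t
          have hb' : b = 0 := by rw [hbdef, mbG_congr n hF1]; exact mbG_false n t
          rw [ha', hb'] at hbe; exact ht0.ne hbe
        · -- dict / true : a = t, b = 1
          exfalso
          have ha' : a = t := by rw [hadef]; exact mbG_dict n i f₀ hD0 t
          have hb' : b = 1 := by rw [hbdef, mbG_congr n hT1]; exact mbG_true n t
          rw [ha', hb'] at hbe; exact ht1.ne hbe.symm
        · -- dict i / dict j
          have hij : j = i := by
            have h1 := hD0 (fun k => decide (k = i))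
            simp only [decide_eq_true_eq, if_pos rfl] at h1
            have h2 := h01 (fun k => decide (k = i))
            rw [h1, hD1] at h2
            have h3 : decide (j = i) = true := by
              cases hdec : decide (j = i)
              · rw [hdec] at h2; exact absurd h2 (by decide)
              · rfl
            exact of_decide_eq_true h3
          subst hij
          refine Or.inr (Or.inr ⟨j.succ, fun x => ?_⟩)
          rw [← Fin.cons_self_tail x, Fin.cons_succ]
          cases h0 : x 0
          · exact hD0 _
          · exact hD1 _
      · -- b - a = 1
        have ha' : a = 0 := by linarith
        have hb' : b = 1 := by linarith
        have hF0 : ∀ x, f₀ x = false := mbG_eq_zero n f₀ ht0 ht1 (hadef ▸ ha')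
        have hT1 : ∀ x, f₁ x = true := mbG_eq_one n f₁ ht0 ht1 (hbdef ▸ hb')
        refine Or.inr (Or.inr ⟨0, fun x => ?_⟩)
        rw [← Fin.cons_self_tail x]
        cases h0 : x 0
        · simpa using hF0 (Fin.tail x)
        · simpa using hT1 (Fin.tail x)

lemma mbW_eq (n : ℕ) (ε : Fin n → Bool) (t : ℝ) :
    ∏ i, (if ε i then t else 1 - t) =
      t ^ (Finset.univ.filter fun i => ε i = true).card *
        (1 - t) ^ (n - (Finset.univ.filter fun i => ε i = true).card) := by
  classical
  rw [← Finset.prod_filter_mul_prod_filter_not Finset.univ (fun i => ε i = true)]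
  have h1 : ∏ i ∈ Finset.univ.filter (fun i => ε i = true), (if ε i then t else 1 - t)
      = t ^ (Finset.univ.filter fun i => ε i = true).card := by
    rw [Finset.prod_congr rfl (fun i hi => if_pos (Finset.mem_filter.mp hi).2),
      Finset.prod_const]
  have h2 : ∏ i ∈ Finset.univ.filter (fun i => ¬ ε i = true), (if ε i then t else 1 - t)
      = (1 - t) ^ (Finset.univ.filter fun i => ¬ ε i = true).card := by
    rw [Finset.prod_congr rfl (fun i hi => if_neg (Finset.mem_filter.mp hi).2),
      Finset.prod_const]
  rw [h1, h2]
  congr 1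
  have h3 : (Finset.univ.filter fun i => ¬ ε i = true) =
      (Finset.univ.filter fun i => ε i = true)ᶜ := by
    ext i; simp
  rw [h3, Finset.card_compl, Fintype.card_fin]

lemma stat01 {n : ℕ} (S : Finset (Finset (Fin n))) (hS : S.Nonempty)
    (hne : ∀ A ∈ S, A.Nonempty) (ε : Fin n → Bool) :
    spernerStat S hS hne (fun i => if ε i then 1 else 0) = 0 ∨
      spernerStat S hS hne (fun i => if ε i then 1 else 0) = 1 := by
  rw [spernerStat]
  obtain ⟨A, hA, hAe⟩ := Finset.exists_mem_eq_sup'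
    (Finset.attach_nonempty_iff.mpr hS)
    (fun A : {x // x ∈ S} => A.1.inf' (hne A.1 A.2) (fun i => if ε i then (1:ℝ) else 0))
  rw [hAe]
  obtain ⟨i, hi, hie⟩ := Finset.exists_mem_eq_inf' (hne A.1 A.2)
    (fun i => if ε i then (1:ℝ) else 0)
  rw [hie]
  cases h : ε i <;> simp [h]

lemma stat_mono {n : ℕ} (S : Finset (Finset (Fin n))) (hS : S.Nonempty)
    (hne : ∀ A ∈ S, A.Nonempty) {ε ε' : Fin n → Bool} (h : ε ≤ ε') :
    spernerStat S hS hne (fun i => if ε i then 1 else 0) ≤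
      spernerStat S hS hne (fun i => if ε' i then 1 else 0) := by
  rw [spernerStat, spernerStat]
  refine Finset.sup'_mono_fun fun A hA => Finset.le_inf' _ _ fun i hi =>
    le_trans (Finset.inf'_le _ hi) ?_
  have hle := h i
  cases h1 : ε i <;> cases h2 : ε' i
  · simp
  · simp
  · rw [h1, h2] at hle
    have := Bool.le_iff_imp.mp hle
    simp at this
  · simp

lemma stat_true {n : ℕ} (S : Finset (Finset (Fin n))) (hS : S.Nonempty)
    (hne : ∀ A ∈ S, A.Nonempty) :
    spernerStat S hS hne (fun i => if (fun _ : Fin n => true) i then 1 else 0) = 1 := by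
  have hx : (fun i => if (fun _ : Fin n => true) i then (1:ℝ) else 0) = fun _ => 1 := by
    funext i; simp
  rw [spernerStat, hx]
  simp [Finset.inf'_const, Finset.sup'_const]

lemma stat_false {n : ℕ} (S : Finset (Finset (Fin n))) (hS : S.Nonempty)
    (hne : ∀ A ∈ S, A.Nonempty) :
    spernerStat S hS hne (fun i => if (fun _ : Fin n => false) i then 1 else 0) = 0 := by
  have hx : (fun i => if (fun _ : Fin n => false) i then (1:ℝ) else 0) = fun _ => 0 := by
    funext i; simp
  rw [spernerStat, hx]
  simp [Finset.inf'_const, Finset.sup'_const]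

/-- Edge-isoperimetric lower bound on the derivative of a Sperner polynomial:
`g_S′(t) ≥ g_S(t)(1 − g_S(t)) / (t(1 − t))` on `(0,1)`, with equality at some point of
`(0,1)` only if `g_S` is the identity. -/
theorem spernerPoly_derivative_isoperimetric_bound
    (n : ℕ) (hn : 1 ≤ n) (S : Finset (Finset (Fin n))) (hS : S.Nonempty)
    (hne : ∀ A ∈ S, A.Nonempty) (hsp : ∀ A ∈ S, ∀ B ∈ S, A ⊆ B → A = B) :
    (∀ t ∈ Set.Ioo (0 : ℝ) 1,
      spernerPoly S hS hne t * (1 - spernerPoly S hS hne t) / (t * (1 - t)) ≤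
        deriv (spernerPoly S hS hne) t) ∧
    (∀ ts ∈ Set.Ioo (0 : ℝ) 1,
      deriv (spernerPoly S hS hne) ts =
          spernerPoly S hS hne ts * (1 - spernerPoly S hS hne ts) / (ts * (1 - ts)) →
        ∀ t : ℝ, spernerPoly S hS hne t = t) := by
  classical
  set f : (Fin n → Bool) → Bool :=
    fun ε => decide (spernerStat S hS hne (fun i => if ε i then 1 else 0) = 1) with hfdef
  have hf_iff : ∀ ε, f ε = true ↔
      spernerStat S hS hne (fun i => if ε i then 1 else 0) = 1 := by
    intro ε
    rw [hfdef]
    exact decide_eq_true_iff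
  have hpoly : spernerPoly S hS hne = mbG n f := by
    funext t
    rw [spernerPoly, mbG]
    refine Finset.sum_congr rfl fun ε _ => ?_
    by_cases h : spernerStat S hS hne (fun i => if ε i then 1 else 0) = 1
    · rw [if_pos h, if_pos ((hf_iff ε).mpr h), one_mul, mbW_eq]
    · rw [if_neg h, if_neg (fun hc => h ((hf_iff ε).mp hc)), zero_mul]
  have hmono : Monotone f := by
    intro ε ε' h
    cases hfe : f ε
    · exact Bool.false_le _
    · have h1 : spernerStat S hS hne (fun i => if ε i then 1 else 0) = 1 :=
        (hf_iff ε).mp hfe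
      have hm := stat_mono S hS hne h
      rcases stat01 S hS hne ε' with h0 | h1'
      · rw [h1, h0] at hm; linarith
      · rw [(hf_iff ε').mpr h1']
  have hftrue : f (fun _ => true) = true := (hf_iff _).mpr (stat_true S hS hne)
  have hffalse : f (fun _ => false) = false := by
    cases hc : f (fun _ => false)
    · rfl
    · exfalso
      have h1 := (hf_iff _).mp hc
      rw [stat_false S hS hne] at h1
      norm_num at h1
  constructor
  · intro t ht
    have htt : 0 < t * (1 - t) := mul_pos ht.1 (by linarith [ht.2])
    rw [hpoly, div_le_iff₀ htt]
    have := (mbG_key n f hmono t ht).1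
    linarith
  · intro ts hts heq
    have htt : 0 < ts * (1 - ts) := mul_pos hts.1 (by linarith [hts.2])
    rw [hpoly] at heq
    have heq' : ts * (1 - ts) * deriv (mbG n f) ts
        = mbG n f ts * (1 - mbG n f ts) := by
      rw [heq]
      field_simp
      rw [div_eq_iff htt.ne']
      ring
    rcases (mbG_key n f hmono ts hts).2 heq' with hF | hT | ⟨i, hD⟩
    · have := hF (fun _ => true)
      rw [hftrue] at this
      simp at this
    · have := hT (fun _ => false)
      rw [hffalse] at this
      simp at this
    · intro t
      rw [hpoly]
      exact mbG_dict n i f hD t
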